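/- Let M_r be the (2r+1)×(2r+1) symmetric tridiagonal integer matrix with diagonal entries alternating -2, 4, -2, 4, ..., -2 (starting and ending with -2) and all off-diagonal (super- and sub-diagonal) entries equal to 1. Then the signature of M_r equals -1 for every r ≥ 0. -/

import Mathlib

open Matrix

/-- The (2r+1)×(2r+1) symmetric tridiagonal matrix with diagonal alternating
−2, 4, −2, 4, …, −2 (1-indexed: −2 at odd positions, i.e. 0-indexed even
positions) and off-diagonal entries 1. -/
def seifertM (r : ℕ) : Matrix (Fin (2 * r + 1)) (Fin (2 * r + 1)) ℝ :=
  fun i j =>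
    if i = j then (if i.val % 2 = 0 then -2 else 4)
    else if i.val + 1 = j.val ∨ j.val + 1 = i.val then 1 else 0

/-- Spectral expansion of the quadratic form of a real symmetric matrix. -/
lemma quad_expand {n : ℕ} (M : Matrix (Fin n) (Fin n) ℝ) (hM : M.IsHermitian) (x : Fin n → ℝ) :
    x ⬝ᵥ (M *ᵥ x) =
      ∑ i, hM.eigenvalues i *
        ((x ᵥ* (hM.eigenvectorUnitary : Matrix (Fin n) (Fin n) ℝ)) i) ^ 2 := by
  set U : Matrix (Fin n) (Fin n) ℝ := (hM.eigenvectorUnitary : Matrix (Fin n) (Fin n) ℝ) with hU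
  have hst : star U = Uᵀ := by
    ext i j
    simp [Matrix.star_apply]
  have hsp := hM.spectral_theorem
  rw [RCLike.ofReal_real_eq_id, Function.id_comp] at hsp
  rw [Unitary.conjStarAlgAut_apply, ← hU] at hsp
  conv_lhs => rw [hsp]
  rw [hst, ← mulVec_mulVec, ← mulVec_mulVec, dotProduct_mulVec, mulVec_transpose, dotProduct]
  refine Finset.sum_congr rfl fun i _ => ?_
  rw [mulVec_diagonal]
  ring

/-- If the quadratic form of `M` is negative on the (nonzero) image of a linear
map from `ℝ^m`, then `M` has at least `m` negative eigenvalues. -/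
lemma card_neg_ge {n m : ℕ} (M : Matrix (Fin n) (Fin n) ℝ) (hM : M.IsHermitian)
    (f : (Fin m → ℝ) →ₗ[ℝ] (Fin n → ℝ))
    (hneg : ∀ c : Fin m → ℝ, c ≠ 0 → (f c) ⬝ᵥ (M *ᵥ f c) < 0) :
    m ≤ (Finset.univ.filter fun i => hM.eigenvalues i < 0).card := by
  by_contra h
  push_neg at h
  set N := (Finset.univ.filter fun i => hM.eigenvalues i < 0) with hN
  set U : Matrix (Fin n) (Fin n) ℝ := (hM.eigenvectorUnitary : Matrix (Fin n) (Fin n) ℝ) with hU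
  let g : (Fin m → ℝ) →ₗ[ℝ] ({i // i ∈ N} → ℝ) :=
  { toFun := fun c i => (f c ᵥ* U) (i : Fin n)
    map_add' := fun a b => by
      ext i
      simp [Matrix.add_vecMul]
    map_smul' := fun t a => by
      ext i
      simp [Matrix.smul_vecMul] }
  have hker : LinearMap.ker g ≠ ⊥ := by
    apply LinearMap.ker_ne_bot_of_finrank_lt (K := ℝ)
    rw [Module.finrank_fintype_fun_eq_card, Module.finrank_fintype_fun_eq_card,
      Fintype.card_fin, Fintype.card_coe]
    exact h
  rw [Submodule.ne_bot_iff] at hker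
  obtain ⟨c, hc, hc0⟩ := hker
  have hgc : ∀ i : {i // i ∈ N}, (f c ᵥ* U) (i : Fin n) = 0 := by
    intro i
    have := LinearMap.mem_ker.mp hc
    exact congrFun this i
  have hge : 0 ≤ (f c) ⬝ᵥ (M *ᵥ f c) := by
    rw [quad_expand M hM (f c)]
    refine Finset.sum_nonneg fun i _ => ?_
    by_cases hl : hM.eigenvalues i < 0
    · have hiN : i ∈ N := by simp [hN, hl]
      have := hgc ⟨i, hiN⟩
      simp only [← hU] at this ⊢
      rw [this]
      ring_nf
      simp
    · exact mul_nonneg (not_lt.mp hl) (sq_nonneg _)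
  exact absurd (hneg c hc0) (not_lt.mpr hge)

/-- If the quadratic form of `M` is positive on the (nonzero) image of a linear
map from `ℝ^m`, then `M` has at least `m` positive eigenvalues. -/
lemma card_pos_ge {n m : ℕ} (M : Matrix (Fin n) (Fin n) ℝ) (hM : M.IsHermitian)
    (f : (Fin m → ℝ) →ₗ[ℝ] (Fin n → ℝ))
    (hpos : ∀ c : Fin m → ℝ, c ≠ 0 → 0 < (f c) ⬝ᵥ (M *ᵥ f c)) :
    m ≤ (Finset.univ.filter fun i => 0 < hM.eigenvalues i).card := by
  by_contra h
  push_neg at h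
  set N := (Finset.univ.filter fun i => 0 < hM.eigenvalues i) with hN
  set U : Matrix (Fin n) (Fin n) ℝ := (hM.eigenvectorUnitary : Matrix (Fin n) (Fin n) ℝ) with hU
  let g : (Fin m → ℝ) →ₗ[ℝ] ({i // i ∈ N} → ℝ) :=
  { toFun := fun c i => (f c ᵥ* U) (i : Fin n)
    map_add' := fun a b => by
      ext i
      simp [Matrix.add_vecMul]
    map_smul' := fun t a => by
      ext i
      simp [Matrix.smul_vecMul] }
  have hker : LinearMap.ker g ≠ ⊥ := by
    apply LinearMap.ker_ne_bot_of_finrank_lt (K := ℝ)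
    rw [Module.finrank_fintype_fun_eq_card, Module.finrank_fintype_fun_eq_card,
      Fintype.card_fin, Fintype.card_coe]
    exact h
  rw [Submodule.ne_bot_iff] at hker
  obtain ⟨c, hc, hc0⟩ := hker
  have hgc : ∀ i : {i // i ∈ N}, (f c ᵥ* U) (i : Fin n) = 0 := by
    intro i
    have := LinearMap.mem_ker.mp hc
    exact congrFun this i
  have hge : (f c) ⬝ᵥ (M *ᵥ f c) ≤ 0 := by
    rw [quad_expand M hM (f c)]
    refine Finset.sum_nonpos fun i _ => ?_
    by_cases hl : 0 < hM.eigenvalues i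
    · have hiN : i ∈ N := by simp [hN, hl]
      have := hgc ⟨i, hiN⟩
      simp only [← hU] at this ⊢
      rw [this]
      ring_nf
      simp
    · exact mul_nonpos_of_nonpos_of_nonneg (not_lt.mp hl) (sq_nonneg _)
  exact absurd (hpos c hc0) (not_lt.mpr hge)

/-- For a vector supported on indices of a fixed parity, the quadratic form of
`seifertM` is purely diagonal. -/
lemma quad_diag (r : ℕ) (p : ℕ) (x : Fin (2 * r + 1) → ℝ)
    (hx : ∀ j : Fin (2 * r + 1), j.val % 2 ≠ p → x j = 0) :
    x ⬝ᵥ (seifertM r *ᵥ x) = ∑ j, seifertM r j j * x j ^ 2 := by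
  rw [dotProduct]
  refine Finset.sum_congr rfl fun j _ => ?_
  by_cases hxj : x j = 0
  · simp [hxj]
  · have hj : j.val % 2 = p := by
      by_contra hcon
      exact hxj (hx j hcon)
    have hmv : (seifertM r *ᵥ x) j = seifertM r j j * x j := by
      rw [mulVec, dotProduct]
      apply Finset.sum_eq_single_of_mem j (Finset.mem_univ j)
      intro k _ hk
      by_cases hadj : j.val + 1 = k.val ∨ k.val + 1 = j.val
      · have hk0 : x k = 0 := hx k (by omega)
        simp [hk0]
      · have : seifertM r j k = 0 := by
          simp only [seifertM]
          rw [if_neg (Ne.symm hk), if_neg hadj]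
        rw [this, zero_mul]
    rw [hmv]
    ring

/-- Embedding of `ℝ^(r+1)` into even-index coordinates. -/
noncomputable def fEven (r : ℕ) : (Fin (r + 1) → ℝ) →ₗ[ℝ] (Fin (2 * r + 1) → ℝ) :=
{ toFun := fun c j => if h : j.val % 2 = 0 then c ⟨j.val / 2, by omega⟩ else 0
  map_add' := fun a b => by
    ext j
    split <;> rename_i hcase <;> simp [hcase]
  map_smul' := fun t a => by
    ext j
    split <;> rename_i hcase <;> simp [hcase] }

/-- Embedding of `ℝ^r` into odd-index coordinates. -/
noncomputable def fOdd (r : ℕ) : (Fin r → ℝ) →ₗ[ℝ] (Fin (2 * r + 1) → ℝ) :=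
{ toFun := fun c j => if h : j.val % 2 = 1 then c ⟨j.val / 2, by have := j.isLt; omega⟩ else 0
  map_add' := fun a b => by
    ext j
    split <;> rename_i hcase <;> simp [hcase]
  map_smul' := fun t a => by
    ext j
    split <;> rename_i hcase <;> simp [hcase] }

lemma quad_fEven (r : ℕ) (c : Fin (r + 1) → ℝ) (hc : c ≠ 0) :
    (fEven r c) ⬝ᵥ (seifertM r *ᵥ fEven r c) < 0 := by
  have hsupp : ∀ j : Fin (2 * r + 1), j.val % 2 ≠ 0 → fEven r c j = 0 := by
    intro j hj
    simp only [fEven, LinearMap.coe_mk, AddHom.coe_mk]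
    rw [dif_neg hj]
  rw [quad_diag r 0 _ hsupp]
  have hterm : ∀ j : Fin (2 * r + 1),
      seifertM r j j * fEven r c j ^ 2 = -2 * fEven r c j ^ 2 := by
    intro j
    by_cases hj : j.val % 2 = 0
    · simp [seifertM, hj]
    · have : fEven r c j = 0 := hsupp j hj
      rw [this]
      ring
  rw [Finset.sum_congr rfl fun j _ => hterm j, ← Finset.mul_sum]
  have hpos : 0 < ∑ j, fEven r c j ^ 2 := by
    obtain ⟨k, hk⟩ : ∃ k, c k ≠ 0 := by
      by_contra hcon
      push_neg at hcon
      exact hc (funext hcon)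
    have hkk : (2 * k.val) < 2 * r + 1 := by have := k.isLt; omega
    refine Finset.sum_pos' (fun j _ => sq_nonneg _) ⟨⟨2 * k.val, hkk⟩, Finset.mem_univ _, ?_⟩
    have hval : fEven r c ⟨2 * k.val, hkk⟩ = c k := by
      simp only [fEven, LinearMap.coe_mk, AddHom.coe_mk]
      rw [dif_pos (by omega)]
      congr 1
      exact Fin.ext (show (2 * k.val) / 2 = k.val by omega)
    rw [hval]
    exact lt_of_le_of_ne (sq_nonneg _) (Ne.symm (pow_ne_zero 2 hk))
  nlinarith

lemma quad_fOdd (r : ℕ) (c : Fin r → ℝ) (hc : c ≠ 0) :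
    0 < (fOdd r c) ⬝ᵥ (seifertM r *ᵥ fOdd r c) := by
  have hsupp : ∀ j : Fin (2 * r + 1), j.val % 2 ≠ 1 → fOdd r c j = 0 := by
    intro j hj
    simp only [fOdd, LinearMap.coe_mk, AddHom.coe_mk]
    rw [dif_neg hj]
  rw [quad_diag r 1 _ hsupp]
  have hterm : ∀ j : Fin (2 * r + 1),
      seifertM r j j * fOdd r c j ^ 2 = 4 * fOdd r c j ^ 2 := by
    intro j
    by_cases hj : j.val % 2 = 1
    · have : ¬ (j.val % 2 = 0) := by omega
      simp [seifertM, this]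
    · have : fOdd r c j = 0 := hsupp j hj
      rw [this]
      ring
  rw [Finset.sum_congr rfl fun j _ => hterm j, ← Finset.mul_sum]
  have hpos : 0 < ∑ j, fOdd r c j ^ 2 := by
    obtain ⟨k, hk⟩ : ∃ k, c k ≠ 0 := by
      by_contra hcon
      push_neg at hcon
      exact hc (funext hcon)
    have hkk : (2 * k.val + 1) < 2 * r + 1 := by have := k.isLt; omega
    refine Finset.sum_pos' (fun j _ => sq_nonneg _) ⟨⟨2 * k.val + 1, hkk⟩, Finset.mem_univ _, ?_⟩
    have hval : fOdd r c ⟨2 * k.val + 1, hkk⟩ = c k := by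
      simp only [fOdd, LinearMap.coe_mk, AddHom.coe_mk]
      rw [dif_pos (by omega)]
      congr 1
      exact Fin.ext (show (2 * k.val + 1) / 2 = k.val by omega)
    rw [hval]
    exact lt_of_le_of_ne (sq_nonneg _) (Ne.symm (pow_ne_zero 2 hk))
  nlinarith

/-- The signature (number of positive eigenvalues minus number of negative
eigenvalues) of `seifertM r` equals −1 for every r ≥ 0. -/
theorem stmt_2 (r : ℕ) (hM : (seifertM r).IsHermitian) :
    ((Finset.univ.filter fun i => 0 < hM.eigenvalues i).card : ℤ) -
      ((Finset.univ.filter fun i => hM.eigenvalues i < 0).card : ℤ) = -1 := by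
  have hneg : r + 1 ≤ (Finset.univ.filter fun i => hM.eigenvalues i < 0).card :=
    card_neg_ge (seifertM r) hM (fEven r) (fun c hc => quad_fEven r c hc)
  have hpos : r ≤ (Finset.univ.filter fun i => 0 < hM.eigenvalues i).card :=
    card_pos_ge (seifertM r) hM (fOdd r) (fun c hc => quad_fOdd r c hc)
  have hdisj : Disjoint (Finset.univ.filter fun i => 0 < hM.eigenvalues i)
      (Finset.univ.filter fun i => hM.eigenvalues i < 0) := by
    rw [Finset.disjoint_left]
    intro i hi hi'
    rw [Finset.mem_filter] at hi hi'
    linarith [hi.2, hi'.2]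
  have hsum : (Finset.univ.filter fun i => 0 < hM.eigenvalues i).card +
      (Finset.univ.filter fun i => hM.eigenvalues i < 0).card ≤ 2 * r + 1 := by
    rw [← Finset.card_union_of_disjoint hdisj]
    calc _ ≤ (Finset.univ : Finset (Fin (2 * r + 1))).card :=
          Finset.card_le_card (Finset.subset_univ _)
      _ = 2 * r + 1 := by simp
  omega
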